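/- arXiv:1305.6287 — 4 statements merged into one kernel-verified Lean document; each statement's English description precedes it below -/
import Mathlib

section
/- Let m ≥ 3 and consider the graph G whose vertices are the non-empty proper subsets of {1,…,m}, with S adjacent to T iff S ≠ T and S ∩ T ≠ ∅. Then the edge chromatic number of G equals its maximum degree, namely χ′(G) = Δ(G) = 2^m − 4. -/
/-- The intersection graph of ideals of a ring: vertices are the proper
non-trivial ideals, two distinct ideals are adjacent iff their intersection
is non-zero. -/
def interGraph (R : Type*) [CommRing R] : SimpleGraph {I : Ideal R // I ≠ ⊥ ∧ I ≠ ⊤} where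
  Adj I J := I ≠ J ∧ I.1 ⊓ J.1 ≠ ⊥
  symm := ⟨by rintro I J ⟨h1, h2⟩; exact ⟨h1.symm, by rwa [inf_comm]⟩⟩
  loopless := ⟨by rintro I ⟨h, -⟩; exact h rfl⟩

/-- Degree of a vertex. -/
noncomputable def vdeg {V : Type*} (G : SimpleGraph V) (v : V) : ℕ :=
  Nat.card {w // G.Adj v w}

/-- Maximum degree. -/
noncomputable def maxDeg {V : Type*} (G : SimpleGraph V) : ℕ := ⨆ v, vdeg G v

/-- Edge chromatic number (chromatic index), as the chromatic number of the line graph. -/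
noncomputable def edgeChrom {V : Type*} (G : SimpleGraph V) : ℕ∞ :=
  (SimpleGraph.lineGraph G).chromaticNumber

/-- The intersection graph of non-empty proper subsets of `Fin m`. -/
def subsetGraph (m : ℕ) : SimpleGraph {S : Finset (Fin m) // S ≠ ∅ ∧ S ≠ Finset.univ} where
  Adj S T := S ≠ T ∧ (S.1 ∩ T.1).Nonempty
  symm := ⟨by rintro S T ⟨h1, h2⟩; exact ⟨h1.symm, by rwa [Finset.inter_comm]⟩⟩
  loopless := ⟨by rintro S ⟨h, -⟩; exact h rfl⟩

/-! ### Auxiliary machinery for the edge coloring -/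

/-- The symmetric edge color function on `ZMod k × Bool`. -/
def col {k : ℕ} (a b : ZMod k × Bool) : ℕ :=
  match a, b with
  | (x, false), (y, false) => (x + y).val
  | (x, true), (y, true) => (x + y + 2).val
  | (x, false), (y, true) => if y = x - 1 then (2 * x).val else k + (y - x).val - 1
  | (x, true), (y, false) => if x = y - 1 then (2 * y).val else k + (x - y).val - 1

lemma col_symm {k : ℕ} (a b : ZMod k × Bool) : col a b = col b a := by
  rcases a with ⟨x, _ | _⟩ <;> rcases b with ⟨y, _ | _⟩ <;>
    simp [col, add_comm x y, add_right_comm]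

lemma val_one_le {k : ℕ} [NeZero k] {z : ZMod k} (hz : z ≠ 0) : 1 ≤ z.val := by
  rcases Nat.eq_zero_or_pos z.val with h | h
  · exact absurd ((ZMod.val_eq_zero z).mp h) hz
  · exact h

lemma val_ne_pred {k : ℕ} (hk : 3 ≤ k) {z : ZMod k} (hz : z ≠ -1) : z.val ≠ k - 1 := by
  haveI : NeZero k := ⟨by omega⟩
  intro h
  apply hz
  apply ZMod.val_injective
  rw [h]
  obtain ⟨j, rfl⟩ : ∃ j, k = j + 1 := ⟨k - 1, by omega⟩
  exact (ZMod.val_neg_one j).symm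

lemma sub_ne_neg_one_left {k : ℕ} {x y : ZMod k} (h : ¬ y = x - 1) : y - x ≠ -1 := by
  intro hc
  exact h (by rw [sub_eq_iff_eq_add] at hc; rw [hc]; ring)

lemma col_lt {k : ℕ} (hk : 3 ≤ k) {x y : ZMod k} {s t : Bool} (hxy : y ≠ x) :
    col (x, s) (y, t) < 2 * k - 2 := by
  haveI : NeZero k := ⟨by omega⟩
  have hvlt : ∀ z : ZMod k, z.val < k := fun z => ZMod.val_lt z
  cases s <;> cases t
  · have := hvlt (x + y); simp only [col]; omega
  · show (if y = x - 1 then (2*x).val else k + (y - x).val - 1) < 2 * k - 2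
    split_ifs with h
    · have := hvlt (2 * x); omega
    · have h1 : (y - x).val ≠ k - 1 := val_ne_pred hk (sub_ne_neg_one_left h)
      have := hvlt (y - x); omega
  · show (if x = y - 1 then (2*y).val else k + (x - y).val - 1) < 2 * k - 2
    split_ifs with h
    · have := hvlt (2 * y); omega
    · have h1 : (x - y).val ≠ k - 1 := val_ne_pred hk (sub_ne_neg_one_left h)
      have := hvlt (x - y); omega
  · have := hvlt (x + y + 2); simp only [col]; omega

lemma col_key {k : ℕ} (hk : 3 ≤ k) {x y y' : ZMod k} {s t t' : Bool}
    (hy : y ≠ x) (hy' : y' ≠ x) (hne : (y, t) ≠ (y', t'))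
    (h : col (x, s) (y, t) = col (x, s) (y', t')) : False := by
  haveI : NeZero k := ⟨by omega⟩
  have hinj : ∀ u v : ZMod k, u.val = v.val → u = v := fun u v hv => ZMod.val_injective k hv
  have hge : ∀ u v : ZMod k, u ≠ v → 1 ≤ (u - v).val := fun u v huv =>
    val_one_le (sub_ne_zero_of_ne huv)
  have e1 := ZMod.val_lt (2 * x); have e2 := ZMod.val_lt (2 * y); have e3 := ZMod.val_lt (2 * y')
  have e4 := ZMod.val_lt (x + y); have e5 := ZMod.val_lt (x + y')
  have e6 := ZMod.val_lt (x + y + 2); have e7 := ZMod.val_lt (x + y' + 2)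
  have e8 := ZMod.val_lt (y - x); have e9 := ZMod.val_lt (y' - x)
  have e10 := ZMod.val_lt (x - y); have e11 := ZMod.val_lt (x - y')
  have f1 := hge _ _ hy; have f2 := hge _ _ hy'
  have f3 := hge _ _ hy.symm; have f4 := hge _ _ hy'.symm
  have hcol : ∀ z z' : ZMod k, z = z' → (z, t) = (z', t) := fun z z' hz => by rw [hz]
  cases s <;> cases t <;> cases t' <;> simp only [col] at h
  · exact hne (hcol _ _ (by have := hinj _ _ h; linear_combination this))
  · split_ifs at h with h1
    · exact hy (by have := hinj _ _ h; linear_combination this)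
    · omega
  · split_ifs at h with h1
    · exact hy' (by have := hinj _ _ h; linear_combination -this)
    · omega
  · split_ifs at h with h1 h2 h2
    · exact hne (hcol _ _ (h1.trans h2.symm))
    · omega
    · omega
    · have h3 : (y - x).val = (y' - x).val := by omega
      exact hne (hcol _ _ (by have := hinj _ _ h3; linear_combination this))
  · split_ifs at h with h1 h2 h2
    · exact hne (hcol _ _ (by rw [h1] at h2; linear_combination h2))
    · omega
    · omega
    · have h3 : (x - y).val = (x - y').val := by omega
      exact hne (hcol _ _ (by have := hinj _ _ h3; linear_combination -this))
  · split_ifs at h with h1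
    · exact hy' (by have := hinj _ _ h; linear_combination -this - 2*h1)
    · omega
  · split_ifs at h with h1
    · exact hy (by have := hinj _ _ h; linear_combination this - 2*h1)
    · omega
  · exact hne (hcol _ _ (by have := hinj _ _ h; linear_combination this))

/-! ### Binary encoding of finsets -/

def enc {m : ℕ} (S : Finset (Fin m)) : ℕ := ∑ i ∈ S, 2 ^ (i : ℕ)

lemma enc_eq_image {m : ℕ} (S : Finset (Fin m)) :
    enc S = ∑ j ∈ S.image Fin.val, 2 ^ j :=
  (Finset.sum_image (fun _ _ _ _ hxy => Fin.val_injective hxy)).symm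

lemma enc_inj {m : ℕ} : Function.Injective (enc (m := m)) := by
  intro S T h
  have key : (fun s : Finset ℕ => ∑ i ∈ s, 2 ^ i) (S.image Fin.val)
      = (fun s : Finset ℕ => ∑ i ∈ s, 2 ^ i) (T.image Fin.val) := by
    simp only
    rw [← enc_eq_image, ← enc_eq_image]
    exact h
  exact Finset.image_injective Fin.val_injective
    (Finset.geomSum_injective (le_refl 2) key)

lemma enc_pos {m : ℕ} {S : Finset (Fin m)} (hS : S.Nonempty) : 1 ≤ enc S := by
  obtain ⟨x, hx⟩ := hS
  calc 1 ≤ 2 ^ (x : ℕ) := Nat.one_le_two_pow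
  _ ≤ enc S := Finset.single_le_sum (f := fun i : Fin m => 2 ^ (i : ℕ))
      (fun i _ => Nat.zero_le _) hx

lemma enc_le {m n : ℕ} {S : Finset (Fin m)} (h : ∀ i ∈ S, (i : ℕ) < n) :
    enc S ≤ 2 ^ n - 1 := by
  have hS := enc_eq_image S
  have hsub : S.image Fin.val ⊆ Finset.range n := by
    intro j hj
    obtain ⟨i, hi, rfl⟩ := Finset.mem_image.mp hj
    exact Finset.mem_range.mpr (h i hi)
  have h2 : ∑ j ∈ S.image Fin.val, 2 ^ j ≤ ∑ j ∈ Finset.range n, 2 ^ j :=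
    Finset.sum_le_sum_of_subset hsub
  have hr : ∑ j ∈ Finset.range n, 2 ^ j = 2 ^ n - 1 := by
    rw [Nat.geomSum_eq (le_refl 2)]
    simp
  omega

/-! ### The vertex encoding -/

lemma k_ge_three {m : ℕ} (hm : 3 ≤ m) : 3 ≤ 2 ^ (m - 1) - 1 := by
  have : 2 ^ 2 ≤ 2 ^ (m - 1) := Nat.pow_le_pow_right (by norm_num) (by omega)
  omega

/-- The encoding of vertices as elements of `ZMod (2^(m-1)-1) × Bool`. -/
noncomputable def EV (m : ℕ) (hm : 3 ≤ m)
    (S : {S : Finset (Fin m) // S ≠ ∅ ∧ S ≠ Finset.univ}) : ZMod (2 ^ (m - 1) - 1) × Bool :=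
  if (⟨m - 1, by omega⟩ : Fin m) ∈ S.1
  then (((enc (Finset.univ \ S.1) - 1 : ℕ) : ZMod (2 ^ (m - 1) - 1)), true)
  else (((enc S.1 - 1 : ℕ) : ZMod (2 ^ (m - 1) - 1)), false)

lemma enc_bounds {m : ℕ} (hm : 3 ≤ m) {T : Finset (Fin m)} (hne : T ≠ ∅)
    (ha : (⟨m - 1, by omega⟩ : Fin m) ∉ T) :
    1 ≤ enc T ∧ enc T ≤ 2 ^ (m - 1) - 1 := by
  refine ⟨enc_pos (Finset.nonempty_iff_ne_empty.mpr hne), enc_le fun i hi => ?_⟩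
  have h1 : (i : ℕ) < m := i.2
  have h2 : (i : ℕ) ≠ m - 1 := by
    intro hc
    exact ha (by rwa [show (⟨m - 1, by omega⟩ : Fin m) = i from Fin.ext hc.symm])
  omega

lemma cast_good_inj {m : ℕ} (hm : 3 ≤ m) {T U : Finset (Fin m)}
    (hT : T ≠ ∅) (haT : (⟨m - 1, by omega⟩ : Fin m) ∉ T)
    (hU : U ≠ ∅) (haU : (⟨m - 1, by omega⟩ : Fin m) ∉ U)
    (h : ((enc T - 1 : ℕ) : ZMod (2 ^ (m - 1) - 1)) = ((enc U - 1 : ℕ) : ZMod (2 ^ (m - 1) - 1))) :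
    T = U := by
  have hk := k_ge_three hm
  obtain ⟨hT1, hT2⟩ := enc_bounds hm hT haT
  obtain ⟨hU1, hU2⟩ := enc_bounds hm hU haU
  haveI : NeZero (2 ^ (m - 1) - 1) := ⟨by omega⟩
  have := congrArg ZMod.val h
  rw [ZMod.val_cast_of_lt (by omega), ZMod.val_cast_of_lt (by omega)] at this
  exact enc_inj (by omega : enc T = enc U)

lemma compl_ne_empty {m : ℕ} {S : Finset (Fin m)} (hS : S ≠ Finset.univ) :
    Finset.univ \ S ≠ ∅ := by
  intro h
  exact hS (Finset.univ_subset_iff.mp (Finset.sdiff_eq_empty_iff_subset.mp h))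

lemma EV_inj (m : ℕ) (hm : 3 ≤ m) : Function.Injective (EV m hm) := by
  intro S T h
  unfold EV at h
  split_ifs at h with h1 h2 h2
  · -- both contain the top element
    simp only [Prod.mk.injEq, and_true] at h
    have := cast_good_inj hm (compl_ne_empty S.2.2)
      (by simp [Finset.mem_sdiff, h1]) (compl_ne_empty T.2.2)
      (by simp [Finset.mem_sdiff, h2]) h
    have h3 : S.1 = T.1 := by
      have e1 := Finset.sdiff_sdiff_eq_self (Finset.subset_univ S.1)
      have e2 := Finset.sdiff_sdiff_eq_self (Finset.subset_univ T.1)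
      rw [← e1, ← e2, this]
    exact Subtype.ext h3
  · exact absurd (congrArg Prod.snd h) (by simp)
  · exact absurd (congrArg Prod.snd h) (by simp)
  · simp only [Prod.mk.injEq, and_true] at h
    exact Subtype.ext (cast_good_inj hm S.2.1 h1 T.2.1 h2 h)

lemma EV_fst_ne (m : ℕ) (hm : 3 ≤ m)
    {S T : {S : Finset (Fin m) // S ≠ ∅ ∧ S ≠ Finset.univ}}
    (hadj : (subsetGraph m).Adj S T) : (EV m hm S).1 ≠ (EV m hm T).1 := by
  obtain ⟨hST, hint⟩ := hadj
  intro h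
  unfold EV at h
  split_ifs at h with h1 h2 h2
  · -- both contain top: same as injectivity
    apply hST
    have := cast_good_inj hm (compl_ne_empty S.2.2)
      (by simp [Finset.mem_sdiff, h1]) (compl_ne_empty T.2.2)
      (by simp [Finset.mem_sdiff, h2]) h
    apply Subtype.ext
    have e1 := Finset.sdiff_sdiff_eq_self (Finset.subset_univ S.1)
    have e2 := Finset.sdiff_sdiff_eq_self (Finset.subset_univ T.1)
    rw [← e1, ← e2, this]
  · -- top ∈ S, top ∉ T : univ \ S = T, so S ∩ T = ∅
    have := cast_good_inj hm (compl_ne_empty S.2.2)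
      (by simp [Finset.mem_sdiff, h1]) T.2.1 h2 h
    have hdisj : S.1 ∩ T.1 = ∅ := by
      rw [← this, Finset.inter_comm]
      exact Finset.sdiff_inter_self _ _
    rw [hdisj] at hint
    exact absurd hint (by simp)
  · have := cast_good_inj hm S.2.1 h1 (compl_ne_empty T.2.2)
      (by simp [Finset.mem_sdiff, h2]) h
    have hdisj : S.1 ∩ T.1 = ∅ := by
      rw [this, Finset.inter_comm]
      exact Finset.inter_sdiff_self _ _
    rw [hdisj] at hint
    exact absurd hint (by simp)
  · exact hST (Subtype.ext (cast_good_inj hm S.2.1 h1 T.2.1 h2 h))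


/-! ### Counting -/

lemma card_ne_ne {α : Type*} [Fintype α] (a b : α) (hab : a ≠ b) :
    Nat.card {x : α // x ≠ a ∧ x ≠ b} = Fintype.card α - 2 := by
  classical
  rw [Nat.card_eq_fintype_card]
  have e : {x : α // x ≠ a ∧ x ≠ b} ≃ {x : α // ¬ (x = a ∨ x = b)} :=
    Equiv.subtypeEquivRight (by tauto)
  rw [Fintype.card_congr e, Fintype.card_subtype_compl]
  congr 1
  have e2 : {x : α // x = a ∨ x = b} ≃ {x : α // x ∈ ({a, b} : Finset α)} :=
    Equiv.subtypeEquivRight (by simp)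
  rw [Fintype.card_congr e2, Fintype.card_coe, Finset.card_pair hab]

lemma card_vtx (m : ℕ) (hm : 3 ≤ m) :
    Fintype.card {S : Finset (Fin m) // S ≠ ∅ ∧ S ≠ Finset.univ} = 2 ^ m - 2 := by
  classical
  haveI : Nonempty (Fin m) := ⟨⟨0, by omega⟩⟩
  have e : {S : Finset (Fin m) // S ≠ ∅ ∧ S ≠ Finset.univ}
      ≃ {S : Finset (Fin m) // ¬ (S = ∅ ∨ S = Finset.univ)} :=
    Equiv.subtypeEquivRight (by tauto)
  rw [Fintype.card_congr e, Fintype.card_subtype_compl]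
  have e2 : {S : Finset (Fin m) // S = ∅ ∨ S = Finset.univ}
      ≃ {S : Finset (Fin m) // S ∈ ({∅, Finset.univ} : Finset (Finset (Fin m)))} :=
    Equiv.subtypeEquivRight (by simp)
  rw [Fintype.card_congr e2, Fintype.card_coe,
    Finset.card_pair (Finset.univ_nonempty.ne_empty).symm ]
  rw [Fintype.card_finset, Fintype.card_fin]

/-! ### Special vertices -/

/-- The vertex `{0}`. -/
def zV (m : ℕ) (hm : 3 ≤ m) : {S : Finset (Fin m) // S ≠ ∅ ∧ S ≠ Finset.univ} :=
  ⟨{⟨0, by omega⟩}, by simp, by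
    intro h
    have h1 : (⟨1, by omega⟩ : Fin m) ∈ ({(⟨0, by omega⟩ : Fin m)} : Finset (Fin m)) := by
      rw [h]; exact Finset.mem_univ _
    rw [Finset.mem_singleton] at h1
    exact absurd (congrArg Fin.val h1) (by simp)⟩

/-- The complement of a vertex. -/
def cV {m : ℕ} (v : {S : Finset (Fin m) // S ≠ ∅ ∧ S ≠ Finset.univ}) :
    {S : Finset (Fin m) // S ≠ ∅ ∧ S ≠ Finset.univ} :=
  ⟨Finset.univ \ v.1, compl_ne_empty v.2.2, by
    intro h
    obtain ⟨x, hx⟩ := Finset.nonempty_iff_ne_empty.mpr v.2.1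
    have : x ∈ Finset.univ \ v.1 := by rw [h]; exact Finset.mem_univ _
    rw [Finset.mem_sdiff] at this
    exact this.2 hx⟩

lemma ne_cV {m : ℕ} (v : {S : Finset (Fin m) // S ≠ ∅ ∧ S ≠ Finset.univ}) : v ≠ cV v := by
  intro h
  obtain ⟨x, hx⟩ := Finset.nonempty_iff_ne_empty.mpr v.2.1
  have h2 : x ∈ Finset.univ \ v.1 := by
    have : x ∈ (cV v).1 := by rw [← h]; exact hx
    exact this
  rw [Finset.mem_sdiff] at h2
  exact h2.2 hx

lemma adj_ne_cV {m : ℕ} {v w : {S : Finset (Fin m) // S ≠ ∅ ∧ S ≠ Finset.univ}}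
    (h : (subsetGraph m).Adj v w) : w ≠ cV v := by
  intro hc
  have h2 := h.2
  rw [hc] at h2
  have : v.1 ∩ (cV v).1 = ∅ := Finset.inter_sdiff_self _ _
  rw [this] at h2
  exact absurd h2 (by simp)

lemma vdeg_le (m : ℕ) (hm : 3 ≤ m) (v : {S : Finset (Fin m) // S ≠ ∅ ∧ S ≠ Finset.univ}) :
    vdeg (subsetGraph m) v ≤ 2 ^ m - 4 := by
  have hinj : Function.Injective
      (fun w : {w // (subsetGraph m).Adj v w} =>
        (⟨w.1, (w.2.ne).symm, adj_ne_cV w.2⟩ : {w // w ≠ v ∧ w ≠ cV v})) := by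
    intro w w' h
    simp only [Subtype.mk.injEq] at h
    exact Subtype.ext h
  have hle := Nat.card_le_card_of_injective _ hinj
  have hcard := card_ne_ne v (cV v) (ne_cV v)
  rw [card_vtx m hm] at hcard
  calc vdeg (subsetGraph m) v ≤ Nat.card {w // w ≠ v ∧ w ≠ cV v} := hle
  _ = 2 ^ m - 2 - 2 := hcard
  _ ≤ 2 ^ m - 4 := by omega

lemma adj_v0_iff (m : ℕ) (hm : 3 ≤ m)
    (w : {S : Finset (Fin m) // S ≠ ∅ ∧ S ≠ Finset.univ}) :
    (subsetGraph m).Adj (cV (zV m hm)) w ↔ w ≠ cV (zV m hm) ∧ w ≠ zV m hm := by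
  constructor
  · intro h
    exact ⟨(h.ne).symm, by
      intro hc
      have h2 := h.2
      rw [hc] at h2
      have : (cV (zV m hm)).1 ∩ (zV m hm).1 = ∅ := Finset.sdiff_inter_self _ _
      rw [this] at h2
      exact absurd h2 (by simp)⟩
  · rintro ⟨h1, h2⟩
    refine ⟨h1.symm, ?_⟩
    rw [Finset.nonempty_iff_ne_empty]
    intro hc
    apply h2
    apply Subtype.ext
    have hsub : w.1 ⊆ (zV m hm).1 := by
      intro x hx
      by_contra hx0
      have hmem : x ∈ (cV (zV m hm)).1 ∩ w.1 :=
        Finset.mem_inter.mpr ⟨Finset.mem_sdiff.mpr ⟨Finset.mem_univ _, hx0⟩, hx⟩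
      rw [hc] at hmem
      exact absurd hmem (by simp)
    rcases Finset.subset_singleton_iff.mp hsub with h | h
    · exact absurd h w.2.1
    · exact h

lemma vdeg_v0 (m : ℕ) (hm : 3 ≤ m) :
    vdeg (subsetGraph m) (cV (zV m hm)) = 2 ^ m - 4 := by
  unfold vdeg
  have e : {w // (subsetGraph m).Adj (cV (zV m hm)) w}
      ≃ {w // w ≠ cV (zV m hm) ∧ w ≠ zV m hm} :=
    Equiv.subtypeEquivRight (fun w => adj_v0_iff m hm w)
  rw [Nat.card_congr e, card_ne_ne _ _ (ne_cV (zV m hm)).symm, card_vtx m hm]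
  omega

lemma maxDeg_eq (m : ℕ) (hm : 3 ≤ m) : maxDeg (subsetGraph m) = 2 ^ m - 4 := by
  haveI : Nonempty {S : Finset (Fin m) // S ≠ ∅ ∧ S ≠ Finset.univ} := ⟨zV m hm⟩
  have hbdd : BddAbove (Set.range fun v => vdeg (subsetGraph m) v) := by
    refine ⟨2 ^ m - 4, ?_⟩
    rintro x ⟨v, rfl⟩
    exact vdeg_le m hm v
  apply le_antisymm
  · exact ciSup_le (vdeg_le m hm)
  · calc (2 : ℕ) ^ m - 4 = vdeg (subsetGraph m) (cV (zV m hm)) := (vdeg_v0 m hm).symm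
    _ ≤ maxDeg (subsetGraph m) := le_ciSup hbdd _

/-! ### The edge coloring -/

lemma colorable_line (m : ℕ) (hm : 3 ≤ m) :
    (SimpleGraph.lineGraph (subsetGraph m)).Colorable (2 ^ m - 4) := by
  rw [SimpleGraph.colorable_iff_exists_bdd_nat_coloring]
  have hk := k_ge_three hm
  have hpow : 2 ^ m = 2 ^ (m - 1) * 2 := by
    rw [← pow_succ]
    congr 1
    omega
  have h2k : 2 * (2 ^ (m - 1) - 1) - 2 = 2 ^ m - 4 := by omega
  set F : Sym2 {S : Finset (Fin m) // S ≠ ∅ ∧ S ≠ Finset.univ} → ℕ :=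
    Sym2.lift ⟨fun S T => col (EV m hm S) (EV m hm T), fun S T => col_symm _ _⟩ with hF
  refine ⟨SimpleGraph.Coloring.mk (fun e => F e.1) ?_, ?_⟩
  · -- validity
    rintro e₁ e₂ hadj
    obtain ⟨hne, v, hv1, hv2⟩ := SimpleGraph.lineGraph_adj_iff_exists.mp hadj
    obtain ⟨w₁, hw₁⟩ := Sym2.mem_iff_exists.mp hv1
    obtain ⟨w₂, hw₂⟩ := Sym2.mem_iff_exists.mp hv2
    have hadj₁ : (subsetGraph m).Adj v w₁ := by
      have := e₁.2
      rw [hw₁] at this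
      exact this
    have hadj₂ : (subsetGraph m).Adj v w₂ := by
      have := e₂.2
      rw [hw₂] at this
      exact this
    have hww : w₁ ≠ w₂ := by
      intro hc
      apply hne
      apply Subtype.ext
      rw [hw₁, hw₂, hc]
    intro hcol
    simp only [hw₁, hw₂, hF, Sym2.lift_mk] at hcol
    exact col_key hk (EV_fst_ne m hm hadj₁.symm) (EV_fst_ne m hm hadj₂.symm)
      (fun hc => hww (EV_inj m hm hc)) hcol
  · -- boundedness
    rintro ⟨e, he⟩
    induction e using Sym2.ind with
    | _ S T =>
      have hadj : (subsetGraph m).Adj S T := he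
      have hb : col (EV m hm S) (EV m hm T) < 2 * (2 ^ (m - 1) - 1) - 2 :=
        col_lt hk (s := (EV m hm S).2) (t := (EV m hm T).2) (EV_fst_ne m hm hadj.symm)
      show F s(S, T) < 2 ^ m - 4
      rw [hF, Sym2.lift_mk]
      show col (EV m hm S) (EV m hm T) < 2 ^ m - 4
      omega

lemma lower_line (m : ℕ) (hm : 3 ≤ m) (n : ℕ)
    (hc : (SimpleGraph.lineGraph (subsetGraph m)).Colorable n) : 2 ^ m - 4 ≤ n := by
  obtain ⟨C⟩ := hc
  set v0 := cV (zV m hm) with hv0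
  let f : {w // (subsetGraph m).Adj v0 w} → Fin n := fun w =>
    C ⟨s(v0, w.1), (SimpleGraph.mem_edgeSet _).mpr w.2⟩
  have hfinj : Function.Injective f := by
    intro w w' h
    by_contra hne
    have hne' : w.1 ≠ w'.1 := fun hc => hne (Subtype.ext hc)
    have hadj : (SimpleGraph.lineGraph (subsetGraph m)).Adj
        ⟨s(v0, w.1), (SimpleGraph.mem_edgeSet _).mpr w.2⟩
        ⟨s(v0, w'.1), (SimpleGraph.mem_edgeSet _).mpr w'.2⟩ := by
      rw [SimpleGraph.lineGraph_adj_iff_exists]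
      refine ⟨?_, v0, ?_, ?_⟩
      · intro hc
        have := congrArg Subtype.val hc
        simp only at this
        exact hne' (Sym2.congr_right.mp this)
      · exact Sym2.mem_mk_left _ _
      · exact Sym2.mem_mk_left _ _
    exact C.valid hadj h
  have hle := Nat.card_le_card_of_injective f hfinj
  rw [Nat.card_eq_fintype_card (α := Fin n), Fintype.card_fin] at hle
  have hv := vdeg_v0 m hm
  rw [← hv0] at hv
  unfold vdeg at hv
  omega

theorem stmt12 (m : ℕ) (hm : 3 ≤ m) :
    edgeChrom (subsetGraph m) = ((maxDeg (subsetGraph m) : ℕ) : ℕ∞) ∧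
    maxDeg (subsetGraph m) = 2 ^ m - 4 := by
  have h1 : maxDeg (subsetGraph m) = 2 ^ m - 4 := maxDeg_eq m hm
  refine ⟨?_, h1⟩
  rw [h1]
  apply le_antisymm
  · exact (colorable_line m hm).chromaticNumber_le
  · unfold edgeChrom
    rw [SimpleGraph.chromaticNumber_eq_biInf]
    exact le_iInf₂ fun n hn => Nat.cast_le.mpr (lower_line m hm n hn)
end

section
/- Let n = p_1^{n_1} ⋯ p_m^{n_m} with m ≥ 2 such that some n_i is odd and some n_j > 1. Then the intersection graph G(Z/nZ) has an even number of vertices and contains a vertex adjacent to all other vertices, and consequently χ′(G(Z/nZ)) = Δ(G(Z/nZ)). -/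
/-! ### Auxiliary lemmas: edge coloring of graphs of even order -/

open SimpleGraph

section Coloring
variable {V : Type*} [Fintype V]

lemma aux_two_inj {K : ℕ} (hK : Odd K) (x y : ZMod K) (h : 2 * x = 2 * y) : x = y := by
  have hu : IsUnit (2 : ZMod K) := by
    have : Nat.Coprime 2 K := Nat.coprime_two_left.mpr hK
    simpa using (ZMod.isUnit_iff_coprime 2 K).mpr this
  exact hu.mul_left_cancel h

/-- Round-robin edge coloring: any graph on an even number of vertices has chromatic
index at most `|V| - 1`. -/
lemma lineColorable (G : SimpleGraph V) [Nonempty V] (hV : Even (Fintype.card V)) :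
    G.lineGraph.Colorable (Fintype.card V - 1) := by
  set K := Fintype.card V - 1 with hKdef
  have hcard : Fintype.card V = K + 1 := by
    have : 1 ≤ Fintype.card V := Fintype.card_pos
    omega
  have hKodd : Odd K := by
    rcases hV with ⟨s, hs⟩
    rw [hcard] at hs
    exact ⟨s - 1, by omega⟩
  have hK0 : K ≠ 0 := by rcases hKodd with ⟨t, ht⟩; omega
  haveI : NeZero K := ⟨hK0⟩
  obtain ⟨σ⟩ : Nonempty (V ≃ Fin (K + 1)) := by
    rw [← Fintype.card_eq, hcard]; simp
  set m : Fin (K+1) → ZMod K := fun i => ((i : ℕ) : ZMod K) with hm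
  have minj : ∀ i j : Fin (K+1), i ≠ Fin.last K → j ≠ Fin.last K → m i = m j → i = j := by
    intro i j hi hj hij
    have hi' : (i : ℕ) < K := by
      have := Fin.lt_last_iff_ne_last.mpr hi
      simpa [Fin.lt_iff_val_lt_val] using this
    have hj' : (j : ℕ) < K := by
      have := Fin.lt_last_iff_ne_last.mpr hj
      simpa [Fin.lt_iff_val_lt_val] using this
    have := congrArg ZMod.val hij
    rw [hm] at this
    simp only [ZMod.val_natCast_of_lt hi', ZMod.val_natCast_of_lt hj'] at this
    exact Fin.ext this
  set c : V → V → ZMod K := fun a b =>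
    if σ a = Fin.last K then 2 * m (σ b)
    else if σ b = Fin.last K then 2 * m (σ a)
    else m (σ a) + m (σ b) with hc
  have csymm : ∀ a b, c a b = c b a := by
    intro a b
    simp only [hc]
    split_ifs with h1 h2 h2
    · rw [h1, h2]
    · rfl
    · rfl
    · exact add_comm _ _
  have core : ∀ a b b' : V, G.Adj a b → G.Adj a b' → c a b = c a b' → b = b' := by
    intro a b b' hab hab' hcc
    have hba : σ b ≠ σ a := fun h => (G.ne_of_adj hab) (σ.injective h).symm
    have hba' : σ b' ≠ σ a := fun h => (G.ne_of_adj hab') (σ.injective h).symm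
    simp only [hc] at hcc
    by_cases hA : σ a = Fin.last K
    · rw [if_pos hA, if_pos hA] at hcc
      have := aux_two_inj hKodd _ _ hcc
      exact σ.injective (minj _ _ (hA ▸ hba) (hA ▸ hba') this)
    · rw [if_neg hA, if_neg hA] at hcc
      by_cases hB : σ b = Fin.last K
      · by_cases hB' : σ b' = Fin.last K
        · exact σ.injective (hB.trans hB'.symm)
        · rw [if_pos hB, if_neg hB'] at hcc
          have : m (σ a) = m (σ b') := by linear_combination hcc
          exact absurd (σ.injective (minj _ _ hA hB' this)) hab'.ne
      · by_cases hB' : σ b' = Fin.last K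
        · rw [if_neg hB, if_pos hB'] at hcc
          have : m (σ a) = m (σ b) := by linear_combination -hcc
          exact absurd (σ.injective (minj _ _ hA hB this)) hab.ne
        · rw [if_neg hB, if_neg hB'] at hcc
          have : m (σ b) = m (σ b') := by linear_combination hcc
          exact σ.injective (minj _ _ hB hB' this)
  let col : G.edgeSet → ZMod K := fun e => Sym2.lift ⟨c, csymm⟩ e.1
  have proper : ∀ e₁ e₂ : G.edgeSet, G.lineGraph.Adj e₁ e₂ → col e₁ ≠ col e₂ := by
    intro e₁ e₂ hadj
    rw [lineGraph_adj_iff_exists] at hadj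
    obtain ⟨hne, v, hv1, hv2⟩ := hadj
    obtain ⟨b, hb⟩ := Sym2.mem_iff_exists.mp hv1
    obtain ⟨b', hb'⟩ := Sym2.mem_iff_exists.mp hv2
    have hadj1 : G.Adj v b := (G.mem_edgeSet).mp (hb ▸ e₁.2)
    have hadj2 : G.Adj v b' := (G.mem_edgeSet).mp (hb' ▸ e₂.2)
    have hbb' : b ≠ b' := by
      intro h
      apply hne
      apply Subtype.ext
      rw [hb, hb', h]
    intro hcol
    apply hbb'
    apply core v b b' hadj1 hadj2
    have h1 : col e₁ = c v b := by simp [col, hb]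
    have h2 : col e₂ = c v b' := by simp [col, hb']
    rw [← h1, ← h2, hcol]
  have coloring : G.lineGraph.Coloring (ZMod K) :=
    Coloring.mk col (fun {e₁ e₂} h => proper e₁ e₂ h)
  have := coloring.colorable
  rwa [ZMod.card] at this

end Coloring

/-! ### Auxiliary lemmas: classification of ideals of `ZMod n` -/

section Ideals
variable {n : ℕ}

instance zmodPIR (n : ℕ) : IsPrincipalIdealRing (ZMod n) :=
  IsPrincipalIdealRing.of_surjective (Int.castRingHom (ZMod n)) ZMod.intCast_surjective

lemma span_gcd_eq (n a : ℕ) :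
    Ideal.span {(a : ZMod n)} = Ideal.span {((n.gcd a : ℕ) : ZMod n)} := by
  apply le_antisymm
  · rw [Ideal.span_singleton_le_span_singleton]
    exact_mod_cast (Nat.cast_dvd_cast (α := ZMod n) (Nat.gcd_dvd_right n a))
  · rw [Ideal.span_singleton_le_span_singleton]
    have h := Nat.gcd_eq_gcd_ab n a
    refine ⟨((Nat.gcdB n a : ℤ) : ZMod n), ?_⟩
    calc ((n.gcd a : ℕ) : ZMod n) = (((n.gcd a : ℕ) : ℤ) : ZMod n) := by push_cast; ring
    _ = ((n * Nat.gcdA n a + a * Nat.gcdB n a : ℤ) : ZMod n) := by rw [← h]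
    _ = (a : ZMod n) * ((Nat.gcdB n a : ℤ) : ZMod n) := by push_cast; simp [ZMod.natCast_self]

lemma span_set_eq (y : ZMod n) [NeZero n] :
    ((Ideal.span {y} : Ideal (ZMod n)) : Set (ZMod n)) =
      (AddSubgroup.zmultiples y : Set (ZMod n)) := by
  ext x
  simp only [SetLike.mem_coe, Ideal.mem_span_singleton, AddSubgroup.mem_zmultiples_iff]
  constructor
  · rintro ⟨c, rfl⟩
    obtain ⟨k, rfl⟩ := ZMod.natCast_zmod_surjective c
    exact ⟨(k : ℤ), by push_cast [zsmul_eq_mul]; ring⟩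
  · rintro ⟨k, rfl⟩
    exact ⟨((k : ZMod n)), by rw [zsmul_eq_mul]; push_cast; ring⟩

lemma card_span (d : ℕ) (hn : n ≠ 0) :
    Nat.card (Ideal.span {(d : ZMod n)} : Ideal (ZMod n)) = n / n.gcd d := by
  haveI : NeZero n := ⟨hn⟩
  have h1 : Nat.card (Ideal.span {(d : ZMod n)} : Ideal (ZMod n)) =
      Nat.card (AddSubgroup.zmultiples ((d : ZMod n))) := by
    apply Nat.card_congr
    exact Equiv.setCongr (span_set_eq _)
  rw [h1, Nat.card_zmultiples, ZMod.addOrderOf_coe d hn]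

lemma ideal_classify (hn : n ≠ 0) (I : Ideal (ZMod n)) :
    ∃ d : ℕ, d ∣ n ∧ d ≠ 0 ∧ I = Ideal.span {(d : ZMod n)} := by
  haveI : NeZero n := ⟨hn⟩
  obtain ⟨x, hx⟩ := (IsPrincipalIdealRing.principal I).principal
  obtain ⟨a, rfl⟩ := ZMod.natCast_zmod_surjective x
  refine ⟨n.gcd a, Nat.gcd_dvd_left n a, ?_, ?_⟩
  · simp [Nat.gcd_eq_zero_iff, hn]
  · rw [hx]; exact span_gcd_eq n a

lemma span_eq_bot_iff (d : ℕ) (hd : d ∣ n) (hn : n ≠ 0) :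
    Ideal.span {(d : ZMod n)} = (⊥ : Ideal (ZMod n)) ↔ d = n := by
  haveI : NeZero n := ⟨hn⟩
  rw [Ideal.span_singleton_eq_bot, ZMod.natCast_eq_zero_iff]
  exact ⟨fun h => Nat.dvd_antisymm hd h, fun h => h ▸ dvd_rfl⟩

lemma span_eq_top_iff (d : ℕ) (hd : d ∣ n) (hn : n ≠ 0) :
    Ideal.span {(d : ZMod n)} = (⊤ : Ideal (ZMod n)) ↔ d = 1 := by
  haveI : NeZero n := ⟨hn⟩
  rw [Ideal.span_singleton_eq_top, ZMod.isUnit_iff_coprime]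
  constructor
  · intro h
    have : d ∣ Nat.gcd d n := Nat.dvd_gcd dvd_rfl hd
    rw [h] at this
    exact Nat.eq_one_of_dvd_one this
  · intro h; rw [h]; exact Nat.coprime_one_left n

lemma span_inj {d e : ℕ} (hd : d ∣ n) (he : e ∣ n) (hd0 : d ≠ 0) (he0 : e ≠ 0) (hn : n ≠ 0)
    (h : Ideal.span {(d : ZMod n)} = Ideal.span {(e : ZMod n)}) : d = e := by
  have h1 := card_span (n := n) d hn
  have h2 := card_span (n := n) e hn
  rw [h] at h1
  rw [h2] at h1
  rw [Nat.gcd_eq_right hd, Nat.gcd_eq_right he] at h1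
  have h3 := Nat.div_div_self hd hn
  rw [← h1, Nat.div_div_self he hn] at h3
  exact h3.symm

/-- The equivalence between divisors and ideals. -/
noncomputable def divisorsEquivIdeals (hn : n ≠ 0) :
    {d : ℕ // d ∈ n.divisors} ≃ Ideal (ZMod n) := by
  apply Equiv.ofBijective
    (fun d : {d : ℕ // d ∈ n.divisors} => Ideal.span {((d : ℕ) : ZMod n)})
  constructor
  · rintro ⟨d, hd⟩ ⟨e, he⟩ h
    rw [Nat.mem_divisors] at hd he
    have hd0 : d ≠ 0 := by rintro rfl; exact hn (Nat.eq_zero_of_zero_dvd hd.1)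
    have he0 : e ≠ 0 := by rintro rfl; exact hn (Nat.eq_zero_of_zero_dvd he.1)
    exact Subtype.ext (span_inj hd.1 he.1 hd0 he0 hn h)
  · intro I
    obtain ⟨d, h1, h2, h3⟩ := ideal_classify hn I
    exact ⟨⟨d, Nat.mem_divisors.mpr ⟨h1, hn⟩⟩, h3.symm⟩

lemma card_ideals (hn : n ≠ 0) : Nat.card (Ideal (ZMod n)) = n.divisors.card := by
  rw [← Nat.card_congr (divisorsEquivIdeals hn)]
  rw [Nat.card_eq_fintype_card]
  convert Fintype.card_coe n.divisors using 2

end Ideals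

/-! ### Auxiliary lemmas: cardinality bookkeeping and degrees -/

section Degrees
variable {V : Type*} [Fintype V]

lemma aux_card_split (p : V → Prop) :
    Nat.card {x // p x} + Nat.card {x // ¬ p x} = Nat.card V := by
  classical
  rw [← Nat.card_sum]
  exact Nat.card_congr (Equiv.sumCompl p)

lemma aux_card_ne (u : V) : Nat.card {w // w ≠ u} + 1 = Nat.card V := by
  classical
  have h := aux_card_split (fun w : V => w ≠ u)
  have h2 : Nat.card {w : V // ¬ w ≠ u} = 1 := by
    rw [Nat.card_eq_fintype_card]
    have e : {w : V // ¬ w ≠ u} ≃ {w : V // w = u} :=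
      Equiv.subtypeEquivRight (fun w => not_not)
    rw [Fintype.card_congr e, Fintype.card_subtype_eq]
  rw [h2] at h
  exact h

lemma vdeg_add_one_le (G : SimpleGraph V) (v : V) : vdeg G v + 1 ≤ Nat.card V := by
  classical
  rw [← aux_card_ne v]
  have : vdeg G v ≤ Nat.card {w : V // w ≠ v} := by
    have hinj : Function.Injective
        (fun w : {w // G.Adj v w} => (⟨w.1, (w.2).ne'⟩ : {w : V // w ≠ v})) := by
      intro a b h
      simp only [Subtype.mk.injEq] at h
      exact Subtype.ext h
    exact Nat.card_le_card_of_injective _ hinj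
  omega

lemma vdeg_universal (G : SimpleGraph V) (u : V) (hu : ∀ w, w ≠ u → G.Adj u w) :
    vdeg G u + 1 = Nat.card V := by
  classical
  rw [← aux_card_ne u]
  congr 1
  unfold vdeg
  apply Nat.card_congr
  exact Equiv.subtypeEquivRight (fun w => ⟨fun h => h.ne', fun h => hu w h⟩)

lemma maxDeg_universal (G : SimpleGraph V) (u : V) (hu : ∀ w, w ≠ u → G.Adj u w) :
    maxDeg G = Nat.card V - 1 := by
  classical
  haveI : Nonempty V := ⟨u⟩
  apply le_antisymm
  · apply ciSup_le
    intro v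
    have := vdeg_add_one_le G v
    omega
  · have hb : BddAbove (Set.range (vdeg G)) := by
      refine ⟨Nat.card V, ?_⟩
      rintro x ⟨v, rfl⟩
      have := vdeg_add_one_le G v
      omega
    have h1 : vdeg G u ≤ maxDeg G := le_ciSup hb u
    have h2 := vdeg_universal G u hu
    omega

lemma chrom_lower (G : SimpleGraph V) (u : V) (hu : ∀ w, w ≠ u → G.Adj u w) :
    ((Nat.card V - 1 : ℕ) : ℕ∞) ≤ G.lineGraph.chromaticNumber := by
  classical
  set f : {w : V // w ≠ u} → G.edgeSet :=
    fun w => ⟨s(u, w.1), (G.mem_edgeSet).mpr (hu w.1 w.2)⟩ with hf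
  have finj : Function.Injective f := by
    rintro a b h
    apply Subtype.ext
    have : s(u, a.1) = s(u, b.1) := congrArg Subtype.val h
    exact Sym2.congr_right.mp this
  set s : Finset G.edgeSet := Finset.univ.image f with hs
  have hclique : G.lineGraph.IsClique s := by
    rw [SimpleGraph.isClique_iff]
    rintro x hx y hy hxy
    simp only [hs, Finset.coe_image, Set.mem_image, Finset.mem_coe] at hx hy
    obtain ⟨a, -, rfl⟩ := hx
    obtain ⟨b, -, rfl⟩ := hy
    rw [lineGraph_adj_iff_exists]
    exact ⟨hxy, u, Sym2.mem_mk_left _ _, Sym2.mem_mk_left _ _⟩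
  have hcard : s.card = Nat.card V - 1 := by
    rw [hs, Finset.card_image_of_injective _ finj, Finset.card_univ,
      ← Nat.card_eq_fintype_card]
    have := aux_card_ne u
    omega
  have := hclique.card_le_chromaticNumber
  rwa [hcard] at this

lemma chrom_eq (G : SimpleGraph V) (u : V) (hu : ∀ w, w ≠ u → G.Adj u w)
    (heven : Even (Fintype.card V)) :
    G.lineGraph.chromaticNumber = ((Nat.card V - 1 : ℕ) : ℕ∞) := by
  haveI : Nonempty V := ⟨u⟩
  apply le_antisymm
  · have := (lineColorable G heven).chromaticNumber_le
    rwa [Nat.card_eq_fintype_card]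
  · exact chrom_lower G u hu

end Degrees

/-! ### The main theorem -/

theorem stmt14 (n : ℕ) (hn : 0 < n) (hm : 2 ≤ n.primeFactors.card)
    (hodd : ∃ p ∈ n.primeFactors, Odd (n.factorization p))
    (hbig : ∃ q ∈ n.primeFactors, 1 < n.factorization q) :
    Even (Nat.card {I : Ideal (ZMod n) // I ≠ ⊥ ∧ I ≠ ⊤}) ∧
    (∃ v, ∀ w, w ≠ v → (interGraph (ZMod n)).Adj v w) ∧
    edgeChrom (interGraph (ZMod n)) = ((maxDeg (interGraph (ZMod n)) : ℕ) : ℕ∞) := by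
  classical
  obtain ⟨p, hpmem, hpodd⟩ := hodd
  obtain ⟨q, hqmem, hq2⟩ := hbig
  have hn' : n ≠ 0 := hn.ne'
  haveI : NeZero n := ⟨hn'⟩
  have hqp : q.Prime := Nat.prime_of_mem_primeFactors hqmem
  have hqdvd : q ∣ n := Nat.dvd_of_mem_primeFactors hqmem
  have hq0 : q ≠ 0 := hqp.ne_zero
  -- n ≥ q^2 > q
  have hq2dvd : q ^ 2 ∣ n := by
    calc q ^ 2 ∣ q ^ (n.factorization q) := pow_dvd_pow q hq2
    _ ∣ n := Nat.ordProj_dvd n q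
  have hqltn : q < n := by
    have h1 : q ^ 2 ≤ n := Nat.le_of_dvd hn hq2dvd
    have h2 : q < q ^ 2 := by nlinarith [hqp.two_le]
    omega
  have hn1 : 1 < n := lt_of_le_of_lt (Nat.one_le_iff_ne_zero.mpr hq0) hqltn
  haveI : Fact (1 < n) := ⟨hn1⟩
  haveI : Nontrivial (ZMod n) := ZMod.nontrivial n
  have hbotTop : (⊥ : Ideal (ZMod n)) ≠ ⊤ := by
    intro h
    have : (1 : ZMod n) ∈ (⊥ : Ideal (ZMod n)) := h ▸ Submodule.mem_top
    exact one_ne_zero (Ideal.mem_bot.mp this)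
  haveI : Finite (Ideal (ZMod n)) := inferInstance
  haveI : Fintype (Ideal (ZMod n)) := Fintype.ofFinite _
  -- the universal vertex
  set U : Ideal (ZMod n) := Ideal.span {(q : ZMod n)} with hU
  have hUbot : U ≠ ⊥ := by
    rw [hU, Ne, span_eq_bot_iff q hqdvd hn']
    omega
  have hUtop : U ≠ ⊤ := by
    rw [hU, Ne, span_eq_top_iff q hqdvd hn']
    exact hqp.ne_one
  set u : {I : Ideal (ZMod n) // I ≠ ⊥ ∧ I ≠ ⊤} := ⟨U, hUbot, hUtop⟩ with hu
  -- universality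
  have huniv : ∀ w, w ≠ u → (interGraph (ZMod n)).Adj u w := by
    rintro ⟨J, hJb, hJt⟩ hw
    obtain ⟨d, hdvd, hd0, rfl⟩ := ideal_classify hn' J
    have hdn : d ≠ n := fun h => hJb ((span_eq_bot_iff d hdvd hn').mpr h)
    have hd1 : d ≠ 1 := fun h => hJt ((span_eq_top_iff d hdvd hn').mpr h)
    refine ⟨fun h => hw h.symm, ?_⟩
    -- find a prime where d's exponent is deficient
    have hnd : ¬ n ∣ d := fun h => hdn (Nat.dvd_antisymm hdvd h)
    have hex : ∃ r, d.factorization r < n.factorization r := by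
      by_contra hc
      push_neg at hc
      apply hnd
      rw [← Nat.factorization_le_iff_dvd hn' hd0]
      intro r
      exact hc r
    obtain ⟨r, hr⟩ := hex
    set L := Nat.lcm q d with hL
    have hL0 : L ≠ 0 := Nat.lcm_ne_zero hq0 hd0
    have hLdvd : L ∣ n := Nat.lcm_dvd hqdvd hdvd
    have hfact : L.factorization r < n.factorization r := by
      rw [hL, Nat.factorization_lcm hq0 hd0]
      rw [Finsupp.sup_apply]
      have hqf : q.factorization r = if q = r then 1 else 0 := by
        rw [hqp.factorization, Finsupp.single_apply]
      by_cases hqr : q = r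
      · subst hqr
        have h1 : q.factorization q = 1 := by simp [hqp.factorization]
        rw [h1]
        exact sup_lt_iff.mpr ⟨by omega, hr⟩
      · have h1 : q.factorization r = 0 := by
          simp [hqp.factorization, Finsupp.single_apply, hqr]
        rw [h1]
        simpa using hr
    have hLn : L ≠ n := by
      intro h
      rw [h] at hfact
      omega
    have hnL : ¬ n ∣ L := fun h => hLn (Nat.dvd_antisymm hLdvd h)
    have hx0 : ((L : ℕ) : ZMod n) ≠ 0 := by
      rwa [Ne, ZMod.natCast_eq_zero_iff]
    intro hinf
    apply hx0
    have hmem : ((L : ℕ) : ZMod n) ∈ U ⊓ Ideal.span {(d : ZMod n)} := by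
      constructor
      · exact Ideal.mem_span_singleton.mpr (Nat.cast_dvd_cast (Nat.dvd_lcm_left q d))
      · exact Ideal.mem_span_singleton.mpr (Nat.cast_dvd_cast (Nat.dvd_lcm_right q d))
    rw [hinf] at hmem
    exact Ideal.mem_bot.mp hmem
  -- cardinality: Nat.card vertices + 2 = number of divisors
  have hsplit := aux_card_split (fun I : Ideal (ZMod n) => I ≠ ⊥ ∧ I ≠ ⊤)
  have htwo : Nat.card {I : Ideal (ZMod n) // ¬ (I ≠ ⊥ ∧ I ≠ ⊤)} = 2 := by
    have e : {I : Ideal (ZMod n) // ¬ (I ≠ ⊥ ∧ I ≠ ⊤)} ≃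
        ({⊥, ⊤} : Set (Ideal (ZMod n))) := by
      apply Equiv.subtypeEquivRight
      intro I
      simp only [Set.mem_insert_iff, Set.mem_singleton_iff]
      tauto
    rw [Nat.card_congr e, Nat.card_coe_set_eq, Set.ncard_pair hbotTop]
  rw [htwo, card_ideals hn'] at hsplit
  have hdiveven : Even (n.divisors.card) := by
    rw [Nat.card_divisors hn']
    have hdvd2 : (n.factorization p + 1) ∣
        ∏ a ∈ n.primeFactors, (n.factorization a + 1) :=
      Finset.dvd_prod_of_mem _ hpmem
    have h2 : 2 ∣ n.factorization p + 1 := by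
      rcases hpodd with ⟨k, hk⟩
      exact ⟨k + 1, by omega⟩
    exact (even_iff_two_dvd).mpr (h2.trans hdvd2)
  have hNeven : Even (Nat.card {I : Ideal (ZMod n) // I ≠ ⊥ ∧ I ≠ ⊤}) := by
    rw [← hsplit] at hdiveven
    rcases hdiveven with ⟨k, hk⟩
    exact ⟨k - 1, by omega⟩
  refine ⟨hNeven, ⟨u, huniv⟩, ?_⟩
  -- chromatic index
  haveI : Fintype {I : Ideal (ZMod n) // I ≠ ⊥ ∧ I ≠ ⊤} := Fintype.ofFinite _
  have hcardeq : Nat.card {I : Ideal (ZMod n) // I ≠ ⊥ ∧ I ≠ ⊤} =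
      Fintype.card {I : Ideal (ZMod n) // I ≠ ⊥ ∧ I ≠ ⊤} := Nat.card_eq_fintype_card
  have heven' : Even (Fintype.card {I : Ideal (ZMod n) // I ≠ ⊥ ∧ I ≠ ⊤}) := by
    rwa [hcardeq] at hNeven
  rw [edgeChrom, chrom_eq (interGraph (ZMod n)) u huniv heven',
    maxDeg_universal (interGraph (ZMod n)) u huniv]
end

section
/- If n = p^m is a prime power with m odd, m ≥ 3, then χ′(G(Z/nZ)) = Δ(G(Z/nZ)) = m − 2. -/
section ZModAux
variable {p m : ℕ}

lemma zmod_pow_eq_zero (hm : m ≤ t) : ((p : ZMod (p ^ m)) ^ t = 0) := by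
  have h1 : ((p : ZMod (p ^ m)) ^ m) = 0 := by
    have := ZMod.natCast_self (p ^ m)
    push_cast at this
    exact this
  calc (p : ZMod (p ^ m)) ^ t = (p : ZMod (p^m)) ^ m * (p:ZMod (p^m)) ^ (t - m) := by
        rw [← pow_add]; congr 1; omega
    _ = 0 := by rw [h1, zero_mul]

lemma zmod_pow_ne_zero (hp : p.Prime) (hm : 1 ≤ m) {j : ℕ} (hj : j ≤ m - 1) :
    (p : ZMod (p ^ m)) ^ j ≠ 0 := by
  haveI : NeZero (p ^ m) := ⟨pow_ne_zero _ hp.ne_zero⟩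
  have key : (p : ZMod (p ^ m)) ^ (m - 1) ≠ 0 := by
    intro h
    have h2 : ((p ^ (m-1) : ℕ) : ZMod (p ^ m)) = 0 := by push_cast; exact h
    rw [ZMod.natCast_eq_zero_iff] at h2
    have := (Nat.pow_dvd_pow_iff_le_right hp.one_lt).mp h2
    omega
  intro h
  apply key
  calc (p : ZMod (p ^ m)) ^ (m-1) = (p:ZMod (p^m)) ^ (m-1-j) * (p:ZMod (p^m)) ^ j := by
        rw [← pow_add]; congr 1; omega
    _ = 0 := by rw [h, mul_zero]

lemma zmod_exists_unit (hp : p.Prime) {x : ZMod (p ^ m)} (hx : x ≠ 0) :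
    ∃ k < m, ∃ u : (ZMod (p ^ m))ˣ, x = (p : ZMod (p ^ m)) ^ k * u := by
  haveI : NeZero (p ^ m) := ⟨pow_ne_zero _ hp.ne_zero⟩
  set a := x.val with ha
  have hxa : ((a : ℕ) : ZMod (p ^ m)) = x := ZMod.natCast_rightInverse x
  have ha0 : a ≠ 0 := by
    intro h; apply hx; rw [← hxa, h, Nat.cast_zero]
  set k := a.factorization p with hk
  set b := a / p ^ k with hb
  have hab : p ^ k * b = a := Nat.ordProj_mul_ordCompl_eq_self a p
  have hpb : ¬ p ∣ b := Nat.not_dvd_ordCompl hp ha0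
  have hkm : k < m := by
    have h1 : p ^ k ≤ a := Nat.le_of_dvd (Nat.pos_of_ne_zero ha0) ⟨b, hab.symm⟩
    have h2 : a < p ^ m := ZMod.val_lt x
    exact (Nat.pow_lt_pow_iff_right hp.one_lt).mp (lt_of_le_of_lt h1 h2)
  have hcop : b.Coprime (p ^ m) := Nat.Coprime.pow_right m ((hp.coprime_iff_not_dvd.mpr hpb).symm)
  refine ⟨k, hkm, ZMod.unitOfCoprime b hcop, ?_⟩
  have : ((ZMod.unitOfCoprime b hcop : (ZMod (p^m))ˣ) : ZMod (p^m)) = (b : ZMod (p^m)) := rfl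
  rw [this, ← hxa, ← hab]
  push_cast
  ring

end ZModAux


section IdealAux
variable {p m : ℕ}

lemma zmod_pow_mem (hp : p.Prime) {I : Ideal (ZMod (p ^ m))} {k : ℕ} {u : (ZMod (p^m))ˣ}
    (h : ((p : ZMod (p^m)) ^ k * u : ZMod (p^m)) ∈ I) : (p : ZMod (p^m)) ^ k ∈ I := by
  have h2 := I.mul_mem_right ((u⁻¹ : (ZMod (p^m))ˣ) : ZMod (p^m)) h
  rwa [mul_assoc, Units.mul_inv, mul_one] at h2

lemma zmod_pow_pred_mem (hp : p.Prime) {I : Ideal (ZMod (p ^ m))} (hI : I ≠ ⊥) :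
    (p : ZMod (p ^ m)) ^ (m - 1) ∈ I := by
  obtain ⟨x, hxI, hx⟩ := (Submodule.ne_bot_iff I).mp hI
  obtain ⟨k, hk, u, rfl⟩ := zmod_exists_unit hp hx
  have hpk : (p : ZMod (p^m)) ^ k ∈ I := zmod_pow_mem hp hxI
  have : (p : ZMod (p^m)) ^ (m - 1) = (p : ZMod (p^m)) ^ (m - 1 - k) * (p : ZMod (p^m)) ^ k := by
    rw [← pow_add]; congr 1; omega
  rw [this]
  exact I.mul_mem_left _ hpk

lemma zmod_ideal_classify (hp : p.Prime) (hm : 1 ≤ m) {I : Ideal (ZMod (p ^ m))}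
    (hb : I ≠ ⊥) (ht : I ≠ ⊤) :
    ∃ k, 1 ≤ k ∧ k ≤ m - 1 ∧ I = Ideal.span {(p : ZMod (p ^ m)) ^ k} := by
  set S := {k | (p : ZMod (p ^ m)) ^ k ∈ I} with hS
  have hmS : m ∈ S := by
    simp only [hS, Set.mem_setOf_eq, zmod_pow_eq_zero (le_refl m)]; exact I.zero_mem
  have hne : S.Nonempty := ⟨m, hmS⟩
  set k := sInf S with hkdef
  have hkS : k ∈ S := Nat.sInf_mem hne
  have hkm : k ≤ m := Nat.sInf_le hmS
  have hIeq : I = Ideal.span {(p : ZMod (p ^ m)) ^ k} := by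
    apply le_antisymm
    · intro x hx
      by_cases hx0 : x = 0
      · rw [hx0]; exact Ideal.zero_mem _
      · obtain ⟨j, hj, u, rfl⟩ := zmod_exists_unit hp hx0
        have hjS : j ∈ S := zmod_pow_mem hp hx
        have hkj : k ≤ j := Nat.sInf_le hjS
        exact Ideal.mem_span_singleton.mpr (dvd_mul_of_dvd_left (pow_dvd_pow _ hkj) _)
    · rw [Ideal.span_le, Set.singleton_subset_iff]
      exact hkS
  have hk1 : 1 ≤ k := by
    by_contra h
    have hk0 : k = 0 := by omega
    apply ht
    rw [Ideal.eq_top_iff_one]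
    have h1 : (p : ZMod (p ^ m)) ^ k ∈ I := hkS
    rwa [hk0, pow_zero] at h1
  have hkm1 : k ≤ m - 1 := by
    rcases Nat.lt_or_ge k m with h | h
    · omega
    · exfalso
      apply hb
      rw [hIeq, Ideal.span_singleton_eq_bot]
      exact zmod_pow_eq_zero (by omega)
  exact ⟨k, hk1, hkm1, hIeq⟩

lemma zmod_span_ne_bot (hp : p.Prime) (hm : 1 ≤ m) {k : ℕ} (hk : k ≤ m - 1) :
    Ideal.span {(p : ZMod (p ^ m)) ^ k} ≠ ⊥ := by
  rw [Ne, Ideal.span_singleton_eq_bot]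
  exact zmod_pow_ne_zero hp hm hk

lemma zmod_span_ne_top (hp : p.Prime) (hm : 1 ≤ m) {k : ℕ} (hk1 : 1 ≤ k) (hk : k ≤ m - 1) :
    Ideal.span {(p : ZMod (p ^ m)) ^ k} ≠ ⊤ := by
  intro h
  have h1 : (1 : ZMod (p ^ m)) ∈ Ideal.span {(p : ZMod (p ^ m)) ^ k} := by
    rw [h]; trivial
  obtain ⟨c, hc⟩ := Ideal.mem_span_singleton.mp h1
  have : (p : ZMod (p ^ m)) ^ (m - k) = 0 := by
    calc (p : ZMod (p ^ m)) ^ (m - k) = (p : ZMod (p^m)) ^ (m-k) * 1 := (mul_one _).symm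
      _ = (p : ZMod (p^m)) ^ (m-k) * ((p:ZMod (p^m)) ^ k * c) := by rw [← hc]
      _ = (p : ZMod (p^m)) ^ m * c := by rw [← mul_assoc, ← pow_add]; congr 2; omega
      _ = 0 := by rw [zmod_pow_eq_zero (le_refl m), zero_mul]
  exact zmod_pow_ne_zero hp hm (by omega) this

lemma zmod_span_inj (hp : p.Prime) (hm : 1 ≤ m) {a b : ℕ} (ha : a ≤ m - 1) (hb : b ≤ m - 1)
    (h : Ideal.span {(p : ZMod (p ^ m)) ^ a} = Ideal.span {(p : ZMod (p ^ m)) ^ b}) : a = b := by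
  have key : ∀ a b : ℕ, a < b → b ≤ m - 1 → a ≤ m - 1 →
      Ideal.span {(p : ZMod (p ^ m)) ^ a} ≠ Ideal.span {(p : ZMod (p ^ m)) ^ b} := by
    intro a b hab hb ha h
    have h1 : (p : ZMod (p^m)) ^ a ∈ Ideal.span {(p : ZMod (p ^ m)) ^ b} := by
      rw [← h]; exact Ideal.mem_span_singleton.mpr dvd_rfl
    obtain ⟨c, hc⟩ := Ideal.mem_span_singleton.mp h1
    have : (p : ZMod (p ^ m)) ^ (m - 1) = 0 := by
      calc (p : ZMod (p^m)) ^ (m-1) = (p : ZMod (p^m)) ^ (m-1-a) * (p:ZMod (p^m)) ^ a := by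
            rw [← pow_add]; congr 1; omega
        _ = (p : ZMod (p^m)) ^ (m-1-a) * ((p:ZMod (p^m)) ^ b * c) := by rw [← hc]
        _ = (p : ZMod (p^m)) ^ (m-1-a+b) * c := by rw [← mul_assoc, ← pow_add]
        _ = 0 := by rw [zmod_pow_eq_zero (by omega), zero_mul]
    exact zmod_pow_ne_zero hp hm (le_refl _) this
  rcases lt_trichotomy a b with hlt | heq | hgt
  · exact absurd h (key a b hlt hb ha)
  · exact heq
  · exact absurd h.symm (key b a hgt ha hb)

end IdealAux



open SimpleGraph

section GraphAux
variable {V W : Type*} {G : SimpleGraph V} {G' : SimpleGraph W}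

lemma vdeg_iso (e : G ≃g G') (v : V) : vdeg G v = vdeg G' (e v) :=
  Nat.card_congr (e.toEquiv.subtypeEquiv fun w => (e.map_adj_iff).symm)

lemma maxDeg_iso (e : G ≃g G') : maxDeg G = maxDeg G' := by
  unfold maxDeg
  rw [← sSup_range, ← sSup_range]
  congr 1
  ext n
  constructor
  · rintro ⟨v, rfl⟩; exact ⟨e v, (vdeg_iso e v).symm⟩
  · rintro ⟨w, rfl⟩
    refine ⟨e.symm w, ?_⟩
    show vdeg G (e.symm w) = vdeg G' w
    rw [vdeg_iso e (e.symm w), RelIso.apply_symm_apply]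

def lineIso (e : G ≃g G') : G.lineGraph ≃g G'.lineGraph where
  toEquiv := e.mapEdgeSet
  map_rel_iff' := by
    intro e₁ e₂
    rw [lineGraph_adj_iff_exists, lineGraph_adj_iff_exists]
    constructor
    · rintro ⟨hne, v, hv1, hv2⟩
      refine ⟨fun h => hne (by rw [h]), ?_⟩
      have h1 : (e.mapEdgeSet e₁ : Sym2 W) = Sym2.map e e₁.1 := rfl
      have h2 : (e.mapEdgeSet e₂ : Sym2 W) = Sym2.map e e₂.1 := rfl
      rw [h1, Sym2.mem_map] at hv1
      rw [h2, Sym2.mem_map] at hv2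
      obtain ⟨a, ha, rfl⟩ := hv1
      obtain ⟨b, hb, hba⟩ := hv2
      have : b = a := e.toEquiv.injective hba
      exact ⟨a, ha, this ▸ hb⟩
    · rintro ⟨hne, v, hv1, hv2⟩
      refine ⟨fun h => hne (e.mapEdgeSet.injective h), e v, ?_, ?_⟩
      · exact Sym2.mem_map.mpr ⟨v, hv1, rfl⟩
      · exact Sym2.mem_map.mpr ⟨v, hv2, rfl⟩

lemma chromaticNumber_iso (e : G ≃g G') : G.chromaticNumber = G'.chromaticNumber :=
  le_antisymm (chromaticNumber_mono_of_hom e.toEmbedding.toHom)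
    (chromaticNumber_mono_of_hom e.symm.toEmbedding.toHom)

lemma edgeChrom_iso (e : G ≃g G') : edgeChrom G = edgeChrom G' :=
  chromaticNumber_iso (lineIso e)

end GraphAux

section CompleteGraph

lemma vdeg_top (r : ℕ) (v : Fin r) : vdeg (⊤ : SimpleGraph (Fin r)) v = r - 1 := by
  unfold vdeg
  have h : {w // (⊤ : SimpleGraph (Fin r)).Adj v w} ≃ {w : Fin r // w ≠ v} :=
    Equiv.subtypeEquivRight (fun w => by simp [ne_comm])
  rw [Nat.card_congr h, Nat.card_eq_fintype_card, Fintype.card_subtype_compl,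
    Fintype.card_subtype_eq, Fintype.card_fin]

lemma maxDeg_top (r : ℕ) (hr : 1 ≤ r) : maxDeg (⊤ : SimpleGraph (Fin r)) = r - 1 := by
  unfold maxDeg
  haveI : Nonempty (Fin r) := ⟨⟨0, hr⟩⟩
  simp only [vdeg_top]
  exact ciSup_const

end CompleteGraph




section EdgeColor
variable {r : ℕ}

/-- vertex label in `ZMod (r-1)` -/
def pc (r : ℕ) (v : Fin r) : ZMod (r - 1) := (v.val : ZMod (r - 1))

/-- color of the pair (a, b) -/
def gcol (r : ℕ) (a b : Fin r) : ZMod (r - 1) :=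
  if a.val = r - 1 then pc r b + pc r b
  else if b.val = r - 1 then pc r a + pc r a
  else pc r a + pc r b

lemma gcol_symm (r : ℕ) (a b : Fin r) : gcol r a b = gcol r b a := by
  unfold gcol
  split_ifs with h1 h2 h3
  · have : a = b := Fin.ext (h1.trans h2.symm)
    rw [this]
  · rfl
  · rfl
  · exact add_comm _ _

lemma pc_inj (hr : 1 ≤ r - 1) {x y : Fin r} (hx : x.val < r - 1) (hy : y.val < r - 1)
    (h : pc r x = pc r y) : x = y := by
  haveI : NeZero (r - 1) := ⟨by omega⟩
  unfold pc at h
  have hx' := ZMod.val_cast_of_lt hx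
  have hy' := ZMod.val_cast_of_lt hy
  apply Fin.ext
  rw [← hx', ← hy', h]

lemma gcol_ne (hr : Even r) {v a b : Fin r} (hva : v ≠ a) (hvb : v ≠ b) (hab : a ≠ b) :
    gcol r v a ≠ gcol r v b := by
  have hva' : v.val ≠ a.val := fun h => hva (Fin.ext h)
  have hvb' : v.val ≠ b.val := fun h => hvb (Fin.ext h)
  have hab' : a.val ≠ b.val := fun h => hab (Fin.ext h)
  have hvr := v.isLt
  have har := a.isLt
  have hbr := b.isLt
  have hr3 : 3 ≤ r := by omega
  haveI : NeZero (r - 1) := ⟨by omega⟩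
  have hodd : Odd (r - 1) := Nat.Even.sub_odd (by omega) hr odd_one
  have h2 : IsUnit (2 : ZMod (r - 1)) := by
    have hcop : Nat.Coprime 2 (r - 1) := Nat.coprime_two_left.mpr hodd
    have := (ZMod.isUnit_iff_coprime 2 (r - 1)).mpr hcop
    simpa using this
  unfold gcol
  by_cases hv : v.val = r - 1
  · -- a, b ≠ last
    have ha : a.val ≠ r - 1 := fun h => hva' (hv.trans h.symm)
    have hb : b.val ≠ r - 1 := fun h => hvb' (hv.trans h.symm)
    simp only [hv, if_pos rfl]
    intro h
    have h' : 2 * pc r a = 2 * pc r b := by rw [two_mul, two_mul]; exact h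
    have := h2.mul_left_cancel h'
    exact hab (pc_inj (by omega) (by omega) (by omega) this)
  · by_cases ha : a.val = r - 1
    · have hb : b.val ≠ r - 1 := fun h => hab' (ha.trans h.symm)
      simp only [if_neg hv, if_pos ha, if_neg hb]
      intro h
      have : pc r v = pc r b := by
        have := h
        -- pc v + pc v = pc v + pc b
        exact add_left_cancel this
      exact hvb (pc_inj (by omega) (by omega) (by omega) this)
    · by_cases hb : b.val = r - 1
      · simp only [if_neg hv, if_neg ha, if_pos hb]
        intro h
        have : pc r a = pc r v := add_left_cancel h
        exact hva ((pc_inj (by omega) (by omega) (by omega) this).symm)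
      · simp only [if_neg hv, if_neg ha, if_neg hb]
        intro h
        have : pc r a = pc r b := add_left_cancel h
        exact hab (pc_inj (by omega) (by omega) (by omega) this)

noncomputable def lineColoring (hr : Even r) :
    (lineGraph (⊤ : SimpleGraph (Fin r))).Coloring (ZMod (r - 1)) :=
  Coloring.mk (fun e => Sym2.lift ⟨gcol r, gcol_symm r⟩ e.1) (by
    rintro ⟨e₁, he₁⟩ ⟨e₂, he₂⟩ hadj
    rw [lineGraph_adj_iff_exists] at hadj
    obtain ⟨hne, v, hv1, hv2⟩ := hadj
    obtain ⟨a, ha⟩ := Sym2.mem_iff_exists.mp hv1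
    obtain ⟨b, hb⟩ := Sym2.mem_iff_exists.mp hv2
    simp only [Subtype.coe_mk] at ha hb
    rw [ha] at he₁
    rw [hb] at he₂
    rw [mem_edgeSet, top_adj] at he₁ he₂
    have hab : a ≠ b := by
      intro h
      apply hne
      apply Subtype.ext
      simp only [ha, hb, h]
    show Sym2.lift ⟨gcol r, gcol_symm r⟩ e₁ ≠ Sym2.lift ⟨gcol r, gcol_symm r⟩ e₂
    rw [ha, hb, Sym2.lift_mk, Sym2.lift_mk]
    exact gcol_ne hr he₁ he₂ hab)

lemma edgeChrom_top_le (hr : Even r) (hr2 : 2 ≤ r) :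
    edgeChrom (⊤ : SimpleGraph (Fin r)) ≤ (r - 1 : ℕ) := by
  haveI : NeZero (r - 1) := ⟨by omega⟩
  have h := (lineColoring hr).colorable
  rw [ZMod.card] at h
  exact h.chromaticNumber_le

-- lower bound: clique of edges through vertex 0
def edgeF (r : ℕ) (hr2 : 2 ≤ r) (i : Fin (r - 1)) : (⊤ : SimpleGraph (Fin r)).edgeSet :=
  ⟨s((⟨0, by omega⟩ : Fin r), (⟨i.val + 1, by omega⟩ : Fin r)), by
    rw [mem_edgeSet, top_adj]
    intro h
    have := congrArg Fin.val h
    simp at this⟩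

lemma edgeF_inj (r : ℕ) (hr2 : 2 ≤ r) : Function.Injective (edgeF r hr2) := by
  intro i j h
  have h' : (edgeF r hr2 i : Sym2 (Fin r)) = (edgeF r hr2 j : Sym2 (Fin r)) := by rw [h]
  simp only [edgeF] at h'
  rw [Sym2.congr_right] at h'
  have := congrArg Fin.val h'
  simp at this
  exact Fin.ext this

lemma edgeChrom_top_ge (hr2 : 2 ≤ r) :
    ((r - 1 : ℕ) : ℕ∞) ≤ edgeChrom (⊤ : SimpleGraph (Fin r)) := by
  classical
  set s : Finset (⊤ : SimpleGraph (Fin r)).edgeSet :=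
    Finset.image (edgeF r hr2) Finset.univ with hs
  have hcard : s.card = r - 1 := by
    rw [hs, Finset.card_image_of_injective _ (edgeF_inj r hr2), Finset.card_univ,
      Fintype.card_fin]
  have hclique : (lineGraph (⊤ : SimpleGraph (Fin r))).IsClique ↑s := by
    intro x hx y hy hne
    simp only [hs, Finset.coe_image, Set.mem_image, Finset.coe_univ, Set.image_univ,
      Set.mem_range] at hx hy
    obtain ⟨i, rfl⟩ := hx
    obtain ⟨j, rfl⟩ := hy
    rw [lineGraph_adj_iff_exists]
    refine ⟨hne, ⟨0, by omega⟩, ?_, ?_⟩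
    · simp [edgeF]
    · simp [edgeF]
  have := hclique.card_le_chromaticNumber
  rw [hcard] at this
  exact this

lemma edgeChrom_top (hr : Even r) (hr2 : 2 ≤ r) :
    edgeChrom (⊤ : SimpleGraph (Fin r)) = ((r - 1 : ℕ) : ℕ∞) :=
  le_antisymm (edgeChrom_top_le hr hr2) (edgeChrom_top_ge hr2)

end EdgeColor

section Assemble
variable {p m : ℕ}

def idealF (p m : ℕ) (hp : p.Prime) (hm : 3 ≤ m) (i : Fin (m - 1)) :
    {I : Ideal (ZMod (p ^ m)) // I ≠ ⊥ ∧ I ≠ ⊤} :=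
  ⟨Ideal.span {(p : ZMod (p ^ m)) ^ (i.val + 1)},
    zmod_span_ne_bot hp (by omega) (by have := i.isLt; omega),
    zmod_span_ne_top hp (by omega) (by omega) (by have := i.isLt; omega)⟩

lemma idealF_bij (hp : p.Prime) (hm : 3 ≤ m) : Function.Bijective (idealF p m hp hm) := by
  constructor
  · intro i j h
    have h' : Ideal.span {(p : ZMod (p ^ m)) ^ (i.val + 1)} =
        Ideal.span {(p : ZMod (p ^ m)) ^ (j.val + 1)} := congrArg Subtype.val h
    have := zmod_span_inj hp (by omega) (by have := i.isLt; omega) (by have := j.isLt; omega) h'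
    exact Fin.ext (by omega)
  · rintro ⟨I, hbot, htop⟩
    obtain ⟨k, hk1, hkm, hIeq⟩ := zmod_ideal_classify hp (by omega) hbot htop
    refine ⟨⟨k - 1, by omega⟩, ?_⟩
    apply Subtype.ext
    show Ideal.span {(p : ZMod (p ^ m)) ^ (k - 1 + 1)} = I
    have hk' : k - 1 + 1 = k := by omega
    rw [hk', hIeq]

noncomputable def interIso (hp : p.Prime) (hm : 3 ≤ m) :
    (⊤ : SimpleGraph (Fin (m - 1))) ≃g interGraph (ZMod (p ^ m)) where
  toEquiv := Equiv.ofBijective _ (idealF_bij hp hm)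
  map_rel_iff' := by
    intro i j
    show (interGraph (ZMod (p ^ m))).Adj (idealF p m hp hm i) (idealF p m hp hm j) ↔ i ≠ j
    constructor
    · rintro ⟨h, -⟩
      exact fun hij => h (congrArg _ hij)
    · intro hij
      refine ⟨(idealF_bij hp hm).1.ne hij, ?_⟩
      rw [Submodule.ne_bot_iff]
      refine ⟨(p : ZMod (p ^ m)) ^ (m - 1), Submodule.mem_inf.mpr
        ⟨zmod_pow_pred_mem hp (idealF p m hp hm i).2.1,
         zmod_pow_pred_mem hp (idealF p m hp hm j).2.1⟩,
        zmod_pow_ne_zero hp (by omega) (le_refl _)⟩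

end Assemble

theorem stmt16 (p m : ℕ) (hp : p.Prime) (hm : 3 ≤ m) (hodd : Odd m) :
    edgeChrom (interGraph (ZMod (p ^ m))) =
      ((maxDeg (interGraph (ZMod (p ^ m))) : ℕ) : ℕ∞) ∧
    maxDeg (interGraph (ZMod (p ^ m))) = m - 2 := by
  have hr2 : 2 ≤ m - 1 := by omega
  have hreven : Even (m - 1) := Nat.Odd.sub_odd hodd odd_one
  have e := interIso hp hm
  have hmax : maxDeg (interGraph (ZMod (p ^ m))) = m - 2 := by
    rw [← maxDeg_iso e, maxDeg_top (m - 1) (by omega)]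
    omega
  refine ⟨?_, hmax⟩
  rw [hmax, ← edgeChrom_iso e, edgeChrom_top hreven hr2]
  have h12 : m - 1 - 1 = m - 2 := by omega
  rw [h12]
end

section
/- In the ring Z/nZ with n = p_1^{n_1} ⋯ p_m^{n_m} and m ≥ 2, an ideal I (viewed via CRT as (I_1,…,I_m)) is adjacent in G(Z/nZ) to every other proper non-trivial ideal if and only if all components I_i are non-zero. -/
lemma gcd_mem_span (n a : ℕ) : ((Nat.gcd a n : ℕ) : ZMod n) ∈ Ideal.span {(a : ZMod n)} := by
  have h := Nat.gcd_eq_gcd_ab a n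
  rw [Ideal.mem_span_singleton']
  refine ⟨((Nat.gcdA a n : ℤ) : ZMod n), ?_⟩
  have : ((Nat.gcd a n : ℤ) : ZMod n) = (((a : ℤ) * Nat.gcdA a n + (n : ℤ) * Nat.gcdB a n : ℤ) : ZMod n) := by
    exact_mod_cast congrArg (fun z : ℤ => (z : ZMod n)) h
  push_cast at this
  simp only [ZMod.natCast_self, zero_mul, add_zero] at this
  rw [this]; ring

lemma exists_prime_span (n : ℕ) (hn : 1 < n) (x : ZMod n) (hx : x ≠ 0) :
    ∃ p ∈ n.primeFactors, ((n / p : ℕ) : ZMod n) ∈ Ideal.span {x} := by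
  haveI : NeZero n := ⟨by omega⟩
  set a := x.val with ha
  have hax : (a : ZMod n) = x := ZMod.natCast_zmod_val x
  have ha0 : a ≠ 0 := by
    intro h; apply hx; rw [← hax, h, Nat.cast_zero]
  have haln : a < n := ZMod.val_lt x
  set d := Nat.gcd a n with hd
  have hdn : d ∣ n := Nat.gcd_dvd_right a n
  have hdlt : d < n := lt_of_le_of_lt (Nat.le_of_dvd (by omega) (Nat.gcd_dvd_left a n)) haln
  have hd0 : 0 < d := Nat.gcd_pos_of_pos_left n (by omega)
  have hmul : d * (n / d) = n := Nat.mul_div_cancel' hdn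
  have hnd1 : 1 < n / d := by nlinarith [Nat.div_le_self n d]
  set p := (n / d).minFac with hp
  have hpp : p.Prime := Nat.minFac_prime (by omega)
  have hpnd : p ∣ n / d := Nat.minFac_dvd _
  have hpn : p ∣ n := hpnd.trans (Nat.div_dvd_of_dvd hdn)
  refine ⟨p, Nat.mem_primeFactors.mpr ⟨hpp, hpn, by omega⟩, ?_⟩
  have hdp : d * p ∣ n := by
    rcases hpnd with ⟨k, hk⟩
    exact ⟨k, by rw [← hmul, hk]; ring⟩
  have hdnp : d ∣ n / p := (Nat.dvd_div_iff_mul_dvd hpn).mpr (by rwa [mul_comm] at hdp)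
  have heq : n / p = (n / p / d) * d := (Nat.div_mul_cancel hdnp).symm
  rw [heq, Nat.cast_mul]
  exact Ideal.mul_mem_left _ _ (hax ▸ gcd_mem_span n a)

lemma span_np_min (n : ℕ) (hn : 1 < n) (p : ℕ) (hp : p ∈ n.primeFactors)
    (y : ZMod n) (hy : y ≠ 0) (hmem : y ∈ Ideal.span {((n / p : ℕ) : ZMod n)}) :
    ((n / p : ℕ) : ZMod n) ∈ Ideal.span {y} := by
  obtain ⟨hpp, hpn, -⟩ := Nat.mem_primeFactors.mp hp
  obtain ⟨q, hq, hqmem⟩ := exists_prime_span n hn y hy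
  obtain ⟨hqp, hqn, -⟩ := Nat.mem_primeFactors.mp hq
  -- (n/q) ∈ span {n/p}
  have h1 : ((n / q : ℕ) : ZMod n) ∈ Ideal.span {((n / p : ℕ) : ZMod n)} := by
    have : Ideal.span {y} ≤ Ideal.span {((n / p : ℕ) : ZMod n)} :=
      Ideal.span_le.mpr (by simpa using hmem)
    exact this hqmem
  -- orders
  have hordq : addOrderOf ((n / q : ℕ) : ZMod n) = q := by
    rw [ZMod.addOrderOf_coe _ (by omega), Nat.gcd_eq_right (Nat.div_dvd_of_dvd hqn),
      Nat.div_div_self hqn (by omega)]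
  have hordp : addOrderOf ((n / p : ℕ) : ZMod n) = p := by
    rw [ZMod.addOrderOf_coe _ (by omega), Nat.gcd_eq_right (Nat.div_dvd_of_dvd hpn),
      Nat.div_div_self hpn (by omega)]
  have hdvd : q ∣ p := by
    rw [← hordq, ← hordp]
    obtain ⟨r, hr⟩ := Ideal.mem_span_singleton'.mp h1
    apply addOrderOf_dvd_of_nsmul_eq_zero
    rw [← hr, nsmul_eq_mul]
    have : (addOrderOf ((n / p : ℕ) : ZMod n) : ZMod n) * ((n / p : ℕ) : ZMod n) = 0 := by
      rw [← nsmul_eq_mul]; exact addOrderOf_nsmul_eq_zero _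
    rw [mul_comm r, ← mul_assoc, this, zero_mul]
  have : q = p := (Nat.prime_dvd_prime_iff_eq hqp hpp).mp hdvd
  rwa [this] at hqmem

theorem stmt17 (n : ℕ) (hn : 1 < n) (hm : 2 ≤ n.primeFactors.card)
    (I : Ideal (ZMod n)) (hbot : I ≠ ⊥) (htop : I ≠ ⊤) :
    (∀ J : Ideal (ZMod n), J ≠ ⊥ → J ≠ ⊤ → J ≠ I → I ⊓ J ≠ ⊥) ↔
      ∀ p ∈ n.primeFactors, I ⊓ Ideal.span {((n / p : ℕ) : ZMod n)} ≠ ⊥ := by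
  haveI : NeZero n := ⟨by omega⟩
  constructor
  · intro h p hp
    obtain ⟨hpp, hpn, -⟩ := Nat.mem_primeFactors.mp hp
    have hnp0 : 0 < n / p := Nat.div_pos (Nat.le_of_dvd (by omega) hpn) hpp.pos
    have hnplt : n / p < n := Nat.div_lt_self (by omega) hpp.one_lt
    have hc0 : ((n / p : ℕ) : ZMod n) ≠ 0 := by
      rw [Ne, ZMod.natCast_eq_zero_iff]
      intro hd; exact absurd (Nat.le_of_dvd hnp0 hd) (by omega)
    set J := Ideal.span {((n / p : ℕ) : ZMod n)} with hJ
    have hJbot : J ≠ ⊥ := by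
      rw [hJ, Ne, Ideal.span_singleton_eq_bot]; exact hc0
    have hJtop : J ≠ ⊤ := by
      rw [hJ, Ne, Ideal.span_singleton_eq_top, ZMod.isUnit_iff_coprime]
      intro hcop
      -- find another prime q ≠ p dividing n, then q divides n/p and n
      obtain ⟨q, hq, hqne⟩ : ∃ q ∈ n.primeFactors, q ≠ p := by
        by_contra hcon
        push_neg at hcon
        have : n.primeFactors ⊆ {p} := fun x hx => Finset.mem_singleton.mpr (hcon x hx)
        have := Finset.card_le_card this
        simp at this; omega
      obtain ⟨hqp, hqn, -⟩ := Nat.mem_primeFactors.mp hq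
      have hqnp : q ∣ n / p := by
        have : q ∣ (n / p) * p := by rw [Nat.div_mul_cancel hpn]; exact hqn
        rcases (Nat.Prime.dvd_mul hqp).mp this with h' | h'
        · exact h'
        · exact absurd ((Nat.prime_dvd_prime_iff_eq hqp hpp).mp h') hqne
      have : q ∣ Nat.gcd (n / p) n := Nat.dvd_gcd hqnp hqn
      rw [hcop] at this
      have := Nat.dvd_one.mp this
      have := hqp.two_le
      omega
    by_cases hJI : J = I
    · rw [hJI, inf_idem]; exact hbot
    · exact h J hJbot hJtop hJI
  · intro h J hJbot hJtop hne
    obtain ⟨x, hxJ, hx0⟩ := Submodule.exists_mem_ne_zero_of_ne_bot hJbot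
    obtain ⟨p, hp, hmem⟩ := exists_prime_span n hn x hx0
    have hnpJ : ((n / p : ℕ) : ZMod n) ∈ J := by
      have : Ideal.span {x} ≤ J := Ideal.span_le.mpr (by simpa using hxJ)
      exact this hmem
    have hIp := h p hp
    obtain ⟨y, hyI, hy0⟩ := Submodule.exists_mem_ne_zero_of_ne_bot hIp
    have hnpI : ((n / p : ℕ) : ZMod n) ∈ I := by
      have h2 := span_np_min n hn p hp y hy0 hyI.2
      have : Ideal.span {y} ≤ I := Ideal.span_le.mpr (by simpa using hyI.1)
      exact this h2
    obtain ⟨hpp, hpn, -⟩ := Nat.mem_primeFactors.mp hp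
    have hnp0 : 0 < n / p := Nat.div_pos (Nat.le_of_dvd (by omega) hpn) hpp.pos
    have hnplt : n / p < n := Nat.div_lt_self (by omega) hpp.one_lt
    have hc0 : ((n / p : ℕ) : ZMod n) ≠ 0 := by
      rw [Ne, ZMod.natCast_eq_zero_iff]
      intro hd; exact absurd (Nat.le_of_dvd hnp0 hd) (by omega)
    intro hIJ
    exact hc0 ((Submodule.eq_bot_iff _).mp hIJ _ ⟨hnpI, hnpJ⟩)
end
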